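/- Let ν > 0 be such that √ν is irrational and 1 < √ν < 2, and for each positive integer m let i_m denote the nearest integer to √ν·m (the unique positive integer with |√ν·m − i_m| < 1/2). Then for every positive integer k and every positive integer n satisfying (2k+1)/(2(√ν−1)) − 1 < n < (2k+1)/(2(√ν−1)), one has i_n = n + k and i_{n+1} − i_n > 1. -/
import Mathlib


/-- If `√ν` is irrational with `1 < √ν < 2`, `i m` is the nearest integer to
`√ν·m`, and `n` is a positive integer with `(2k+1)/(2(√ν-1)) - 1 < n < (2k+1)/(2(√ν-1))`
for a positive integer `k`, then `i n = n + k` and `i (n+1) - i n > 1`. -/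
theorem stmt_3 (ν : ℝ) (hν : 0 < ν) (hirr : Irrational (Real.sqrt ν))
    (h1 : 1 < Real.sqrt ν) (h2 : Real.sqrt ν < 2) (i : ℕ → ℕ)
    (hi : ∀ m : ℕ, 1 ≤ m → 0 < i m ∧ |Real.sqrt ν * (m : ℝ) - (i m : ℝ)| < 1 / 2)
    (k n : ℕ) (hk : 1 ≤ k) (hn : 1 ≤ n)
    (hlow : (2 * (k : ℝ) + 1) / (2 * (Real.sqrt ν - 1)) - 1 < (n : ℝ))
    (hhigh : (n : ℝ) < (2 * (k : ℝ) + 1) / (2 * (Real.sqrt ν - 1))) :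
    i n = n + k ∧ 1 < (i (n + 1) : ℤ) - (i n : ℤ) := by
  set s := Real.sqrt ν with hs
  have hpos : (0:ℝ) < 2 * (s - 1) := by linarith
  have hA : (n : ℝ) * (2 * (s - 1)) < 2 * k + 1 := (lt_div_iff₀ hpos).mp hhigh
  have hB : 2 * (k : ℝ) + 1 < ((n : ℝ) + 1) * (2 * (s - 1)) := by
    have : (2 * (k : ℝ) + 1) / (2 * (s - 1)) < (n : ℝ) + 1 := by linarith
    exact (div_lt_iff₀ hpos).mp this
  obtain ⟨hipos, habs⟩ := hi n hn
  obtain ⟨hipos', habs'⟩ := hi (n + 1) (by omega)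
  obtain ⟨l1, l2⟩ := abs_lt.mp habs
  obtain ⟨m1, m2⟩ := abs_lt.mp habs'
  push_cast at m1 m2
  -- s*n is between n+k-1/2 and n+k+1/2
  have hsn1 : s * n < (n : ℝ) + k + 1 / 2 := by nlinarith
  have hsn2 : (n : ℝ) + k + 3 / 2 < s * ((n : ℝ) + 1) := by nlinarith
  have hsn3 : (n : ℝ) + k - 1 / 2 < s * n := by nlinarith
  have e1 : (i n : ℝ) < (n : ℝ) + k + 1 := by linarith
  have e2 : ((n : ℝ) + k) - 1 < (i n : ℝ) := by linarith
  have e3 : ((n : ℝ) + k) + 1 < (i (n + 1) : ℝ) := by linarith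
  have e1' : i n < n + k + 1 := by exact_mod_cast (by push_cast; linarith : (i n : ℝ) < ((n + k + 1 : ℕ) : ℝ))
  have e2' : n + k ≤ i n := by
    by_contra h
    push_neg at h
    have : ((i n : ℕ) : ℝ) + 1 ≤ ((n + k : ℕ) : ℝ) := by exact_mod_cast h
    push_cast at this
    linarith
  have heq : i n = n + k := by omega
  have e3' : n + k + 1 < i (n + 1) := by
    exact_mod_cast (by push_cast; linarith : ((n + k + 1 : ℕ) : ℝ) < (i (n + 1) : ℝ))
  refine ⟨heq, ?_⟩
  have : i n + 1 < i (n + 1) := by omega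
  omega
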